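/- Let φ be an LTL formula and B := B(φ) its basis. For every C ⊆ B: (1) flatten(φ,C) ∈ Σ₂; (2) φ and flatten(φ,C) are equivalent under context ⟨C,B⟩; (3) if C ⊆ C' ⊆ B then flatten(φ,C) ⊨ flatten(φ,C'). -/
import Mathlib


namespace LTLNorm

/-- LTL formulas in negation normal form. -/
inductive F (Ap : Type) : Type
  | tt    : F Ap
  | ff    : F Ap
  | pos   : Ap → F Ap
  | nlit  : Ap → F Ap
  | and   : F Ap → F Ap → F Ap
  | or    : F Ap → F Ap → F Ap
  | next  : F Ap → F Ap
  | untl  : F Ap → F Ap → F Ap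
  | wuntl : F Ap → F Ap → F Ap
  | rel   : F Ap → F Ap → F Ap
  | srel  : F Ap → F Ap → F Ap
  deriving DecidableEq

/-- Infinite words over the alphabet `2^Ap`. -/
abbrev Word (Ap : Type) := ℕ → Set Ap

/-- Suffix of a word starting at position `i`. -/
def suff {Ap : Type} (w : Word Ap) (i : ℕ) : Word Ap := fun n => w (n + i)

/-- Satisfaction relation. -/
def Sat {Ap : Type} : Word Ap → F Ap → Prop
  | _, F.tt => True
  | _, F.ff => False
  | w, F.pos a => a ∈ w 0
  | w, F.nlit a => a ∉ w 0
  | w, F.and φ ψ => Sat w φ ∧ Sat w ψ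
  | w, F.or φ ψ => Sat w φ ∨ Sat w ψ
  | w, F.next φ => Sat (suff w 1) φ
  | w, F.untl φ ψ => ∃ k, Sat (suff w k) ψ ∧ ∀ j < k, Sat (suff w j) φ
  | w, F.wuntl φ ψ => (∀ k, Sat (suff w k) φ) ∨ ∃ k, Sat (suff w k) ψ ∧ ∀ j < k, Sat (suff w j) φ
  | w, F.srel φ ψ => ∃ k, Sat (suff w k) φ ∧ ∀ j ≤ k, Sat (suff w j) ψ
  | w, F.rel φ ψ => (∀ k, Sat (suff w k) ψ) ∨ ∃ k, Sat (suff w k) φ ∧ ∀ j ≤ k, Sat (suff w j) ψ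

/-- Equivalence of formulas. -/
def Equiv {Ap : Type} (φ ψ : F Ap) : Prop := ∀ w : Word Ap, Sat w φ ↔ Sat w ψ

/-- Entailment: every word satisfying `φ` satisfies `ψ`. -/
def Entails {Ap : Type} (φ ψ : F Ap) : Prop := ∀ w : Word Ap, Sat w φ → Sat w ψ

/-- F φ := tt U φ -/
def Ff {Ap : Type} (φ : F Ap) : F Ap := F.untl F.tt φ
/-- G φ := φ W ff -/
def Gf {Ap : Type} (φ : F Ap) : F Ap := F.wuntl φ F.ff
/-- GF φ := G (F φ) -/
def GFf {Ap : Type} (φ : F Ap) : F Ap := Gf (Ff φ)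
/-- FG φ := F (G φ) -/
def FGf {Ap : Type} (φ : F Ap) : F Ap := Ff (Gf φ)

/-- Number of nodes of the syntax tree. -/
def size {Ap : Type} : F Ap → ℕ
  | F.tt => 1
  | F.ff => 1
  | F.pos _ => 1
  | F.nlit _ => 1
  | F.and φ ψ => size φ + size ψ + 1
  | F.or φ ψ => size φ + size ψ + 1
  | F.next φ => size φ + 1
  | F.untl φ ψ => size φ + size ψ + 1
  | F.wuntl φ ψ => size φ + size ψ + 1
  | F.rel φ ψ => size φ + size ψ + 1
  | F.srel φ ψ => size φ + size ψ + 1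

/-- The dual of a formula in negation normal form. -/
def dual {Ap : Type} : F Ap → F Ap
  | F.tt => F.ff
  | F.ff => F.tt
  | F.pos a => F.nlit a
  | F.nlit a => F.pos a
  | F.and φ ψ => F.or (dual φ) (dual ψ)
  | F.or φ ψ => F.and (dual φ) (dual ψ)
  | F.next φ => F.next (dual φ)
  | F.untl φ ψ => F.rel (dual φ) (dual ψ)
  | F.rel φ ψ => F.untl (dual φ) (dual ψ)
  | F.wuntl φ ψ => F.srel (dual φ) (dual ψ)
  | F.srel φ ψ => F.wuntl (dual φ) (dual ψ)

mutual
/-- The class Σ_i of the syntactic future hierarchy. -/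
inductive SigmaC (Ap : Type) : ℕ → F Ap → Prop where
  | tt (i : ℕ) : SigmaC Ap i F.tt
  | ff (i : ℕ) : SigmaC Ap i F.ff
  | pos (i : ℕ) (a : Ap) : SigmaC Ap i (F.pos a)
  | nlit (i : ℕ) (a : Ap) : SigmaC Ap i (F.nlit a)
  | and {i : ℕ} {φ ψ : F Ap} : SigmaC Ap i φ → SigmaC Ap i ψ → SigmaC Ap i (F.and φ ψ)
  | or {i : ℕ} {φ ψ : F Ap} : SigmaC Ap i φ → SigmaC Ap i ψ → SigmaC Ap i (F.or φ ψ)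
  | ofPi {i : ℕ} {φ : F Ap} : PiC Ap i φ → SigmaC Ap (i + 1) φ
  | next {i : ℕ} {φ : F Ap} : SigmaC Ap (i + 1) φ → SigmaC Ap (i + 1) (F.next φ)
  | untl {i : ℕ} {φ ψ : F Ap} :
      SigmaC Ap (i + 1) φ → SigmaC Ap (i + 1) ψ → SigmaC Ap (i + 1) (F.untl φ ψ)
  | srel {i : ℕ} {φ ψ : F Ap} :
      SigmaC Ap (i + 1) φ → SigmaC Ap (i + 1) ψ → SigmaC Ap (i + 1) (F.srel φ ψ)

/-- The class Π_i of the syntactic future hierarchy. -/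
inductive PiC (Ap : Type) : ℕ → F Ap → Prop where
  | tt (i : ℕ) : PiC Ap i F.tt
  | ff (i : ℕ) : PiC Ap i F.ff
  | pos (i : ℕ) (a : Ap) : PiC Ap i (F.pos a)
  | nlit (i : ℕ) (a : Ap) : PiC Ap i (F.nlit a)
  | and {i : ℕ} {φ ψ : F Ap} : PiC Ap i φ → PiC Ap i ψ → PiC Ap i (F.and φ ψ)
  | or {i : ℕ} {φ ψ : F Ap} : PiC Ap i φ → PiC Ap i ψ → PiC Ap i (F.or φ ψ)
  | ofSigma {i : ℕ} {φ : F Ap} : SigmaC Ap i φ → PiC Ap (i + 1) φ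
  | next {i : ℕ} {φ : F Ap} : PiC Ap (i + 1) φ → PiC Ap (i + 1) (F.next φ)
  | rel {i : ℕ} {φ ψ : F Ap} :
      PiC Ap (i + 1) φ → PiC Ap (i + 1) ψ → PiC Ap (i + 1) (F.rel φ ψ)
  | wuntl {i : ℕ} {φ ψ : F Ap} :
      PiC Ap (i + 1) φ → PiC Ap (i + 1) ψ → PiC Ap (i + 1) (F.wuntl φ ψ)
end

/-- The class Δ_i of the syntactic future hierarchy. -/
inductive DeltaC (Ap : Type) : ℕ → F Ap → Prop where
  | ofSigma {i : ℕ} {φ : F Ap} : SigmaC Ap i φ → DeltaC Ap i φ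
  | ofPi {i : ℕ} {φ : F Ap} : PiC Ap i φ → DeltaC Ap i φ
  | and {i : ℕ} {φ ψ : F Ap} : DeltaC Ap i φ → DeltaC Ap i ψ → DeltaC Ap i (F.and φ ψ)
  | or {i : ℕ} {φ ψ : F Ap} : DeltaC Ap i φ → DeltaC Ap i ψ → DeltaC Ap i (F.or φ ψ)

/-- `LangC B C` is the set of words satisfying every formula of `C` and
no formula of `B \ C` (the language of the context `⟨C,B⟩`). -/
def LangC {Ap : Type} (B C : Finset (F Ap)) : Set (Word Ap) :=
  {w | (∀ ψ ∈ C, Sat w ψ) ∧ ∀ ψ ∈ B, ψ ∉ C → ¬ Sat w ψ}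

/-- Equivalence under the context `⟨C,B⟩`. -/
def EquivUnder {Ap : Type} (B C : Finset (F Ap)) (φ₁ φ₂ : F Ap) : Prop :=
  ∀ w ∈ LangC B C, (Sat w φ₁ ↔ Sat w φ₂)

/-- Disjunction of a list of formulas. -/
def bigOr {Ap : Type} (l : List (F Ap)) : F Ap := l.foldr F.or F.ff

/-- Conjunction of a list of formulas. -/
def bigAnd {Ap : Type} (l : List (F Ap)) : F Ap := l.foldr F.and F.tt

variable {Ap : Type} [DecidableEq Ap]

/-- The set of subformulas of a formula. -/
def sf : F Ap → Finset (F Ap)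
  | F.tt => {F.tt}
  | F.ff => {F.ff}
  | F.pos a => {F.pos a}
  | F.nlit a => {F.nlit a}
  | F.and φ ψ => insert (F.and φ ψ) (sf φ ∪ sf ψ)
  | F.or φ ψ => insert (F.or φ ψ) (sf φ ∪ sf ψ)
  | F.next φ => insert (F.next φ) (sf φ)
  | F.untl φ ψ => insert (F.untl φ ψ) (sf φ ∪ sf ψ)
  | F.wuntl φ ψ => insert (F.wuntl φ ψ) (sf φ ∪ sf ψ)
  | F.rel φ ψ => insert (F.rel φ ψ) (sf φ ∪ sf ψ)
  | F.srel φ ψ => insert (F.srel φ ψ) (sf φ ∪ sf ψ)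

/-- `B_GF(φ) = { GF ψ : χ U ψ or ψ M χ is a subformula of φ }`. -/
def BGF (φ : F Ap) : Finset (F Ap) :=
  (sf φ).biUnion fun σ =>
    match σ with
    | F.untl _ ψ => {GFf ψ}
    | F.srel ψ _ => {GFf ψ}
    | _ => ∅

/-- `B_FG(φ) = { FG ψ : χ W ψ or ψ R χ is a subformula of φ }`. -/
def BFG (φ : F Ap) : Finset (F Ap) :=
  (sf φ).biUnion fun σ =>
    match σ with
    | F.wuntl _ ψ => {FGf ψ}
    | F.rel ψ _ => {FGf ψ}
    | _ => ∅

/-- The basis `B(φ) = B_GF(φ) ∪ B_FG(φ)`. -/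
def Bset (φ : F Ap) : Finset (F Ap) := BGF φ ∪ BFG φ

/-- The argument of a basis formula: `GF ψ ↦ ψ` and `FG ψ ↦ ψ`. -/
def innerArg : F Ap → F Ap
  | F.wuntl (F.untl F.tt ψ) F.ff => ψ      -- GF ψ
  | F.untl F.tt (F.wuntl ψ F.ff) => ψ      -- FG ψ
  | φ => φ

/-- `⇓ψ`: the basis formulas of `B(φ0)` strictly below `op(ψ)` in the order `≺`,
i.e. those whose argument is a subformula of `ψ`. -/
def down (φ0 ψ : F Ap) : Finset (F Ap) :=
  (Bset φ0).filter fun χ => innerArg χ ∈ sf ψ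

/-- The formula `eval(ψ, C)`. -/
def eval (C : Finset (F Ap)) : F Ap → F Ap
  | F.tt => F.tt
  | F.ff => F.ff
  | F.pos a => F.pos a
  | F.nlit a => F.nlit a
  | F.and φ ψ => F.and (eval C φ) (eval C ψ)
  | F.or φ ψ => F.or (eval C φ) (eval C ψ)
  | F.next φ => F.next (eval C φ)
  | F.wuntl φ ψ => F.wuntl (eval C φ) (eval C ψ)
  | F.rel φ ψ => F.rel (eval C φ) (eval C ψ)
  | F.untl φ ψ => if GFf ψ ∈ C then F.wuntl (eval C φ) (eval C ψ) else F.ff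
  | F.srel φ ψ => if GFf φ ∈ C then F.rel (eval C φ) (eval C ψ) else F.ff

/-- The formula `flatten(φ, C)`. -/
def flatten (C : Finset (F Ap)) : F Ap → F Ap
  | F.tt => F.tt
  | F.ff => F.ff
  | F.pos a => F.pos a
  | F.nlit a => F.nlit a
  | F.and φ ψ => F.and (flatten C φ) (flatten C ψ)
  | F.or φ ψ => F.or (flatten C φ) (flatten C ψ)
  | F.next φ => F.next (flatten C φ)
  | F.untl φ ψ => F.untl (flatten C φ) (flatten C ψ)
  | F.srel φ ψ => F.srel (flatten C φ) (flatten C ψ)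
  | F.wuntl φ ψ => F.untl (flatten C φ) (F.or (flatten C ψ) (Gf (eval C φ)))
  | F.rel φ ψ => F.srel (F.or (flatten C φ) (Gf (eval C ψ))) (flatten C ψ)
section Aux

lemma suff_suff (w : Word Ap) (i j : ℕ) : suff (suff w i) j = suff w (j + i) := by
  funext n; simp [suff, Nat.add_assoc]

lemma sat_F {w : Word Ap} {ρ : F Ap} : Sat w (Ff ρ) ↔ ∃ k, Sat (suff w k) ρ := by
  simp [Ff, Sat]

lemma sat_G {w : Word Ap} {ρ : F Ap} : Sat w (Gf ρ) ↔ ∀ k, Sat (suff w k) ρ := by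
  simp [Gf, Sat]

lemma sat_GF {w : Word Ap} {ρ : F Ap} :
    Sat w (GFf ρ) ↔ ∀ k, ∃ m, Sat (suff w (m + k)) ρ := by
  simp [GFf, sat_G, sat_F, suff_suff]

lemma sat_FG {w : Word Ap} {ρ : F Ap} :
    Sat w (FGf ρ) ↔ ∃ k, ∀ m, Sat (suff w (m + k)) ρ := by
  simp [FGf, sat_F, sat_G, suff_suff]

lemma sat_GF' {w : Word Ap} {ρ : F Ap} :
    Sat w (GFf ρ) ↔ ∀ n, ∃ p, n ≤ p ∧ Sat (suff w p) ρ := by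
  rw [sat_GF]
  constructor
  · intro h n; obtain ⟨m, hm⟩ := h n; exact ⟨m + n, by omega, hm⟩
  · intro h k
    obtain ⟨p, hp, hs⟩ := h k
    exact ⟨p - k, by rw [show p - k + k = p by omega]; exact hs⟩

lemma sat_FG' {w : Word Ap} {ρ : F Ap} :
    Sat w (FGf ρ) ↔ ∃ n, ∀ p, n ≤ p → Sat (suff w p) ρ := by
  rw [sat_FG]
  constructor
  · rintro ⟨k, h⟩
    exact ⟨k, fun p hp => by have := h (p - k); rwa [show p - k + k = p by omega] at this⟩
  · rintro ⟨n, h⟩; exact ⟨n, fun m => h (m + n) (by omega)⟩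

lemma sat_GF_suff {w : Word Ap} {ρ : F Ap} (i : ℕ) :
    Sat (suff w i) (GFf ρ) ↔ Sat w (GFf ρ) := by
  simp only [sat_GF', suff_suff]
  constructor
  · intro h n
    obtain ⟨p, hp, hs⟩ := h n
    exact ⟨p + i, by omega, hs⟩
  · intro h n
    obtain ⟨p, hp, hs⟩ := h (n + i)
    exact ⟨p - i, by omega, by rwa [show p - i + i = p by omega]⟩

lemma sat_FG_suff {w : Word Ap} {ρ : F Ap} (i : ℕ) :
    Sat (suff w i) (FGf ρ) ↔ Sat w (FGf ρ) := by
  simp only [sat_FG', suff_suff]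
  constructor
  · rintro ⟨n, h⟩
    refine ⟨n + i, fun p hp => ?_⟩
    have := h (p - i) (by omega)
    rwa [show p - i + i = p by omega] at this
  · rintro ⟨n, h⟩; exact ⟨n, fun p hp => h (p + i) (by omega)⟩

lemma mem_sf_self (φ : F Ap) : φ ∈ sf φ := by cases φ <;> simp [sf]

lemma bset_form {φ0 χ : F Ap} (h : χ ∈ Bset φ0) :
    (∃ ρ, χ = GFf ρ) ∨ (∃ ρ, χ = FGf ρ) := by
  rcases Finset.mem_union.1 h with h | h
  · left
    obtain ⟨σ, _, hσ⟩ := Finset.mem_biUnion.1 h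
    cases σ <;> simp_all <;> exact ⟨_, hσ.symm⟩
  · right
    obtain ⟨σ, _, hσ⟩ := Finset.mem_biUnion.1 h
    cases σ <;> simp_all <;> exact ⟨_, hσ.symm⟩

lemma sat_bset_suff {φ0 χ : F Ap} (h : χ ∈ Bset φ0) (w : Word Ap) (i : ℕ) :
    Sat (suff w i) χ ↔ Sat w χ := by
  rcases bset_form h with ⟨ρ, rfl⟩ | ⟨ρ, rfl⟩
  · exact sat_GF_suff i
  · exact sat_FG_suff i

lemma mem_lang_suff {φ0 : F Ap} {C : Finset (F Ap)} {w : Word Ap}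
    (hw : w ∈ LangC (Bset φ0) C) (hC : C ⊆ Bset φ0) (i : ℕ) :
    suff w i ∈ LangC (Bset φ0) C := by
  obtain ⟨h1, h2⟩ := hw
  refine ⟨fun χ hχ => (sat_bset_suff (hC hχ) w i).2 (h1 χ hχ), fun χ hχB hχC hs => ?_⟩
  exact h2 χ hχB hχC ((sat_bset_suff hχB w i).1 hs)

lemma gf_mem_bset_untl {φ0 φ ρ : F Ap} (h : F.untl φ ρ ∈ sf φ0) : GFf ρ ∈ Bset φ0 :=
  Finset.mem_union_left _ (Finset.mem_biUnion.2 ⟨F.untl φ ρ, h, by simp⟩)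

lemma gf_mem_bset_srel {φ0 φ ρ : F Ap} (h : F.srel φ ρ ∈ sf φ0) : GFf φ ∈ Bset φ0 :=
  Finset.mem_union_left _ (Finset.mem_biUnion.2 ⟨F.srel φ ρ, h, by simp⟩)

lemma eval_sound {C : Finset (F Ap)} (ψ : F Ap) :
    ∀ (w : Word Ap), (∀ (i : ℕ), ∀ χ ∈ C, Sat (suff w i) χ) →
      Sat w (eval C ψ) → Sat w ψ := by
  induction ψ with
  | tt => intro w _ h; exact h
  | ff => intro w _ h; exact h
  | pos a => intro w _ h; exact h
  | nlit a => intro w _ h; exact h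
  | and φ ρ ihφ ihρ =>
    intro w hw h
    simp only [eval, Sat] at h ⊢
    exact ⟨ihφ w hw h.1, ihρ w hw h.2⟩
  | or φ ρ ihφ ihρ =>
    intro w hw h
    simp only [eval, Sat] at h ⊢
    rcases h with h | h
    · exact Or.inl (ihφ w hw h)
    · exact Or.inr (ihρ w hw h)
  | next φ ih =>
    intro w hw h
    simp only [eval, Sat] at h ⊢
    exact ih _ (fun i χ hχ => by rw [suff_suff]; exact hw (i + 1) χ hχ) h
  | wuntl φ ρ ihφ ihρ =>
    intro w hw h
    have hws : ∀ k i, ∀ χ ∈ C, Sat (suff (suff w k) i) χ :=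
      fun k i χ hχ => by rw [suff_suff]; exact hw (i + k) χ hχ
    simp only [eval, Sat] at h ⊢
    rcases h with h | ⟨k, hk, hj⟩
    · exact Or.inl fun k => ihφ _ (hws k) (h k)
    · exact Or.inr ⟨k, ihρ _ (hws k) hk, fun j hjk => ihφ _ (hws j) (hj j hjk)⟩
  | rel φ ρ ihφ ihρ =>
    intro w hw h
    have hws : ∀ k i, ∀ χ ∈ C, Sat (suff (suff w k) i) χ :=
      fun k i χ hχ => by rw [suff_suff]; exact hw (i + k) χ hχ
    simp only [eval, Sat] at h ⊢
    rcases h with h | ⟨k, hk, hj⟩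
    · exact Or.inl fun k => ihρ _ (hws k) (h k)
    · exact Or.inr ⟨k, ihφ _ (hws k) hk, fun j hjk => ihρ _ (hws j) (hj j hjk)⟩
  | untl φ ρ ihφ ihρ =>
    intro w hw h
    have hws : ∀ k i, ∀ χ ∈ C, Sat (suff (suff w k) i) χ :=
      fun k i χ hχ => by rw [suff_suff]; exact hw (i + k) χ hχ
    simp only [eval] at h
    by_cases hmem : GFf ρ ∈ C
    · rw [if_pos hmem] at h
      simp only [Sat] at h ⊢
      rcases h with hall | ⟨k, hk, hj⟩
      · have hGF : Sat w (GFf ρ) := hw 0 _ hmem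
        obtain ⟨m, hm⟩ := sat_GF.1 hGF 0
        exact ⟨m + 0, hm, fun j _ => ihφ _ (hws j) (hall j)⟩
      · exact ⟨k, ihρ _ (hws k) hk, fun j hjk => ihφ _ (hws j) (hj j hjk)⟩
    · rw [if_neg hmem] at h
      simp [Sat] at h
  | srel φ ρ ihφ ihρ =>
    intro w hw h
    have hws : ∀ k i, ∀ χ ∈ C, Sat (suff (suff w k) i) χ :=
      fun k i χ hχ => by rw [suff_suff]; exact hw (i + k) χ hχ
    simp only [eval] at h
    by_cases hmem : GFf φ ∈ C
    · rw [if_pos hmem] at h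
      simp only [Sat] at h ⊢
      rcases h with hall | ⟨k, hk, hj⟩
      · have hGF : Sat w (GFf φ) := hw 0 _ hmem
        obtain ⟨m, hm⟩ := sat_GF.1 hGF 0
        exact ⟨m + 0, hm, fun j _ => ihρ _ (hws j) (hall j)⟩
      · exact ⟨k, ihφ _ (hws k) hk, fun j hjk => ihρ _ (hws j) (hj j hjk)⟩
    · rw [if_neg hmem] at h
      simp [Sat] at h

lemma eval_complete {C : Finset (F Ap)} {φ0 : F Ap} {w : Word Ap}
    (hw : w ∈ LangC (Bset φ0) C) :
    ∀ (ψ : F Ap), sf ψ ⊆ sf φ0 →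
      ∃ i, ∀ j, i ≤ j → Sat (suff w j) ψ → Sat (suff w j) (eval C ψ) := by
  intro ψ
  induction ψ with
  | tt => exact fun _ => ⟨0, fun j _ h => h⟩
  | ff => exact fun _ => ⟨0, fun j _ h => h⟩
  | pos a => exact fun _ => ⟨0, fun j _ h => h⟩
  | nlit a => exact fun _ => ⟨0, fun j _ h => h⟩
  | and φ ρ ihφ ihρ =>
    intro hsf
    obtain ⟨i1, h1⟩ := ihφ (fun x hx => hsf (by simp [sf]; tauto))
    obtain ⟨i2, h2⟩ := ihρ (fun x hx => hsf (by simp [sf]; tauto))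
    refine ⟨max i1 i2, fun j hj hs => ?_⟩
    simp only [eval, Sat] at hs ⊢
    exact ⟨h1 j (by omega) hs.1, h2 j (by omega) hs.2⟩
  | or φ ρ ihφ ihρ =>
    intro hsf
    obtain ⟨i1, h1⟩ := ihφ (fun x hx => hsf (by simp [sf]; tauto))
    obtain ⟨i2, h2⟩ := ihρ (fun x hx => hsf (by simp [sf]; tauto))
    refine ⟨max i1 i2, fun j hj hs => ?_⟩
    simp only [eval, Sat] at hs ⊢
    rcases hs with hs | hs
    · exact Or.inl (h1 j (by omega) hs)
    · exact Or.inr (h2 j (by omega) hs)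
  | next φ ih =>
    intro hsf
    obtain ⟨i, hi⟩ := ih (fun x hx => hsf (by simp [sf]; tauto))
    refine ⟨i, fun j hj hs => ?_⟩
    simp only [eval, Sat, suff_suff] at hs ⊢
    exact hi (1 + j) (by omega) hs
  | wuntl φ ρ ihφ ihρ =>
    intro hsf
    obtain ⟨i1, h1⟩ := ihφ (fun x hx => hsf (by simp [sf]; tauto))
    obtain ⟨i2, h2⟩ := ihρ (fun x hx => hsf (by simp [sf]; tauto))
    refine ⟨max i1 i2, fun j hj hs => ?_⟩
    simp only [eval, Sat, suff_suff] at hs ⊢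
    rcases hs with hs | ⟨k, hk, hm⟩
    · exact Or.inl fun k => h1 (k + j) (by omega) (hs k)
    · exact Or.inr ⟨k, h2 (k + j) (by omega) hk, fun m hmk => h1 (m + j) (by omega) (hm m hmk)⟩
  | rel φ ρ ihφ ihρ =>
    intro hsf
    obtain ⟨i1, h1⟩ := ihφ (fun x hx => hsf (by simp [sf]; tauto))
    obtain ⟨i2, h2⟩ := ihρ (fun x hx => hsf (by simp [sf]; tauto))
    refine ⟨max i1 i2, fun j hj hs => ?_⟩
    simp only [eval, Sat, suff_suff] at hs ⊢
    rcases hs with hs | ⟨k, hk, hm⟩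
    · exact Or.inl fun k => h2 (k + j) (by omega) (hs k)
    · exact Or.inr ⟨k, h1 (k + j) (by omega) hk, fun m hmk => h2 (m + j) (by omega) (hm m hmk)⟩
  | untl φ ρ ihφ ihρ =>
    intro hsf
    by_cases hmem : GFf ρ ∈ C
    · obtain ⟨i1, h1⟩ := ihφ (fun x hx => hsf (by simp [sf]; tauto))
      obtain ⟨i2, h2⟩ := ihρ (fun x hx => hsf (by simp [sf]; tauto))
      refine ⟨max i1 i2, fun j hj hs => ?_⟩
      simp only [eval, if_pos hmem, Sat, suff_suff] at hs ⊢
      obtain ⟨k, hk, hm⟩ := hs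
      exact Or.inr ⟨k, h2 (k + j) (by omega) hk, fun m hmk => h1 (m + j) (by omega) (hm m hmk)⟩
    · have hB : GFf ρ ∈ Bset φ0 := gf_mem_bset_untl (hsf (mem_sf_self _))
      have hnot : ¬ Sat w (GFf ρ) := hw.2 _ hB hmem
      rw [sat_GF'] at hnot
      push_neg at hnot
      obtain ⟨n, hn⟩ := hnot
      refine ⟨n, fun j hj hs => ?_⟩
      simp only [Sat, suff_suff] at hs
      obtain ⟨k, hk, -⟩ := hs
      exact absurd hk (hn (k + j) (by omega))
  | srel φ ρ ihφ ihρ =>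
    intro hsf
    by_cases hmem : GFf φ ∈ C
    · obtain ⟨i1, h1⟩ := ihφ (fun x hx => hsf (by simp [sf]; tauto))
      obtain ⟨i2, h2⟩ := ihρ (fun x hx => hsf (by simp [sf]; tauto))
      refine ⟨max i1 i2, fun j hj hs => ?_⟩
      simp only [eval, if_pos hmem, Sat, suff_suff] at hs ⊢
      obtain ⟨k, hk, hm⟩ := hs
      exact Or.inr ⟨k, h1 (k + j) (by omega) hk, fun m hmk => h2 (m + j) (by omega) (hm m hmk)⟩
    · have hB : GFf φ ∈ Bset φ0 := gf_mem_bset_srel (hsf (mem_sf_self _))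
      have hnot : ¬ Sat w (GFf φ) := hw.2 _ hB hmem
      rw [sat_GF'] at hnot
      push_neg at hnot
      obtain ⟨n, hn⟩ := hnot
      refine ⟨n, fun j hj hs => ?_⟩
      simp only [Sat, suff_suff] at hs
      obtain ⟨k, hk, -⟩ := hs
      exact absurd hk (hn (k + j) (by omega))

lemma flatten_correct {C : Finset (F Ap)} {φ0 : F Ap} (hC : C ⊆ Bset φ0) :
    ∀ (ψ : F Ap), sf ψ ⊆ sf φ0 → ∀ w, w ∈ LangC (Bset φ0) C →
      (Sat w ψ ↔ Sat w (flatten C ψ)) := by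
  intro ψ
  induction ψ with
  | tt => exact fun _ _ _ => Iff.rfl
  | ff => exact fun _ _ _ => Iff.rfl
  | pos a => exact fun _ _ _ => Iff.rfl
  | nlit a => exact fun _ _ _ => Iff.rfl
  | and φ ρ ihφ ihρ =>
    intro hsf w hw
    have hsφ : sf φ ⊆ sf φ0 := fun x hx => hsf (by simp [sf]; tauto)
    have hsρ : sf ρ ⊆ sf φ0 := fun x hx => hsf (by simp [sf]; tauto)
    simp only [flatten, Sat]
    rw [ihφ hsφ w hw, ihρ hsρ w hw]
  | or φ ρ ihφ ihρ =>
    intro hsf w hw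
    have hsφ : sf φ ⊆ sf φ0 := fun x hx => hsf (by simp [sf]; tauto)
    have hsρ : sf ρ ⊆ sf φ0 := fun x hx => hsf (by simp [sf]; tauto)
    simp only [flatten, Sat]
    rw [ihφ hsφ w hw, ihρ hsρ w hw]
  | next φ ih =>
    intro hsf w hw
    have hsφ : sf φ ⊆ sf φ0 := fun x hx => hsf (by simp [sf]; tauto)
    simp only [flatten, Sat]
    exact ih hsφ (suff w 1) (mem_lang_suff hw hC 1)
  | untl φ ρ ihφ ihρ =>
    intro hsf w hw
    have hsφ : sf φ ⊆ sf φ0 := fun x hx => hsf (by simp [sf]; tauto)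
    have hsρ : sf ρ ⊆ sf φ0 := fun x hx => hsf (by simp [sf]; tauto)
    simp only [flatten, Sat]
    constructor
    · rintro ⟨k, hk, hm⟩
      exact ⟨k, (ihρ hsρ _ (mem_lang_suff hw hC k)).1 hk,
        fun m hmk => (ihφ hsφ _ (mem_lang_suff hw hC m)).1 (hm m hmk)⟩
    · rintro ⟨k, hk, hm⟩
      exact ⟨k, (ihρ hsρ _ (mem_lang_suff hw hC k)).2 hk,
        fun m hmk => (ihφ hsφ _ (mem_lang_suff hw hC m)).2 (hm m hmk)⟩
  | srel φ ρ ihφ ihρ =>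
    intro hsf w hw
    have hsφ : sf φ ⊆ sf φ0 := fun x hx => hsf (by simp [sf]; tauto)
    have hsρ : sf ρ ⊆ sf φ0 := fun x hx => hsf (by simp [sf]; tauto)
    simp only [flatten, Sat]
    constructor
    · rintro ⟨k, hk, hm⟩
      exact ⟨k, (ihφ hsφ _ (mem_lang_suff hw hC k)).1 hk,
        fun m hmk => (ihρ hsρ _ (mem_lang_suff hw hC m)).1 (hm m hmk)⟩
    · rintro ⟨k, hk, hm⟩
      exact ⟨k, (ihφ hsφ _ (mem_lang_suff hw hC k)).2 hk,
        fun m hmk => (ihρ hsρ _ (mem_lang_suff hw hC m)).2 (hm m hmk)⟩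
  | wuntl φ ρ ihφ ihρ =>
    intro hsf w hw
    have hsφ : sf φ ⊆ sf φ0 := fun x hx => hsf (by simp [sf]; tauto)
    have hsρ : sf ρ ⊆ sf φ0 := fun x hx => hsf (by simp [sf]; tauto)
    have hsatC : ∀ (p : ℕ), ∀ χ ∈ C, Sat (suff w p) χ :=
      fun p χ hχ => (sat_bset_suff (hC hχ) w p).2 (hw.1 χ hχ)
    simp only [flatten, Sat]
    constructor
    · rintro (hall | ⟨k, hk, hm⟩)
      · obtain ⟨i, hi⟩ := eval_complete hw φ hsφ
        refine ⟨i, Or.inr (Or.inl fun k => ?_),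
          fun m _ => (ihφ hsφ _ (mem_lang_suff hw hC m)).1 (hall m)⟩
        rw [suff_suff]
        exact hi (k + i) (by omega) (hall (k + i))
      · exact ⟨k, Or.inl ((ihρ hsρ _ (mem_lang_suff hw hC k)).1 hk),
          fun m hmk => (ihφ hsφ _ (mem_lang_suff hw hC m)).1 (hm m hmk)⟩
    · rintro ⟨k, hk | hk, hm⟩
      · exact Or.inr ⟨k, (ihρ hsρ _ (mem_lang_suff hw hC k)).2 hk,
          fun m hmk => (ihφ hsφ _ (mem_lang_suff hw hC m)).2 (hm m hmk)⟩
      · refine Or.inl fun n => ?_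
        rcases lt_or_ge n k with h | h
        · exact (ihφ hsφ _ (mem_lang_suff hw hC n)).2 (hm n h)
        · have hev : Sat (suff w n) (eval C φ) := by
            rcases hk with hk | ⟨_, hfalse, _⟩
            · have := hk (n - k)
              rwa [suff_suff, show n - k + k = n by omega] at this
            · exact hfalse.elim
          exact eval_sound φ (suff w n)
            (fun i χ hχ => by rw [suff_suff]; exact hsatC (i + n) χ hχ) hev
  | rel φ ρ ihφ ihρ =>
    intro hsf w hw
    have hsφ : sf φ ⊆ sf φ0 := fun x hx => hsf (by simp [sf]; tauto)
    have hsρ : sf ρ ⊆ sf φ0 := fun x hx => hsf (by simp [sf]; tauto)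
    have hsatC : ∀ (p : ℕ), ∀ χ ∈ C, Sat (suff w p) χ :=
      fun p χ hχ => (sat_bset_suff (hC hχ) w p).2 (hw.1 χ hχ)
    simp only [flatten, Sat]
    constructor
    · rintro (hall | ⟨k, hk, hm⟩)
      · obtain ⟨i, hi⟩ := eval_complete hw ρ hsρ
        refine ⟨i, Or.inr (Or.inl fun k => ?_),
          fun m _ => (ihρ hsρ _ (mem_lang_suff hw hC m)).1 (hall m)⟩
        rw [suff_suff]
        exact hi (k + i) (by omega) (hall (k + i))
      · exact ⟨k, Or.inl ((ihφ hsφ _ (mem_lang_suff hw hC k)).1 hk),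
          fun m hmk => (ihρ hsρ _ (mem_lang_suff hw hC m)).1 (hm m hmk)⟩
    · rintro ⟨k, hk | hk, hm⟩
      · exact Or.inr ⟨k, (ihφ hsφ _ (mem_lang_suff hw hC k)).2 hk,
          fun m hmk => (ihρ hsρ _ (mem_lang_suff hw hC m)).2 (hm m hmk)⟩
      · refine Or.inl fun n => ?_
        rcases le_or_gt n k with h | h
        · exact (ihρ hsρ _ (mem_lang_suff hw hC n)).2 (hm n h)
        · have hev : Sat (suff w n) (eval C ρ) := by
            rcases hk with hk | ⟨_, hfalse, _⟩
            · have := hk (n - k)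
              rwa [suff_suff, show n - k + k = n by omega] at this
            · exact hfalse.elim
          exact eval_sound ρ (suff w n)
            (fun i χ hχ => by rw [suff_suff]; exact hsatC (i + n) χ hχ) hev

lemma eval_pi (C : Finset (F Ap)) (ψ : F Ap) : PiC Ap 1 (eval C ψ) := by
  induction ψ with
  | tt => exact PiC.tt 1
  | ff => exact PiC.ff 1
  | pos a => exact PiC.pos 1 a
  | nlit a => exact PiC.nlit 1 a
  | and φ ρ ihφ ihρ => exact PiC.and ihφ ihρ
  | or φ ρ ihφ ihρ => exact PiC.or ihφ ihρ
  | next φ ih => exact PiC.next ih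
  | wuntl φ ρ ihφ ihρ => exact PiC.wuntl ihφ ihρ
  | rel φ ρ ihφ ihρ => exact PiC.rel ihφ ihρ
  | untl φ ρ ihφ ihρ =>
    simp only [eval]
    split_ifs
    · exact PiC.wuntl ihφ ihρ
    · exact PiC.ff 1
  | srel φ ρ ihφ ihρ =>
    simp only [eval]
    split_ifs
    · exact PiC.rel ihφ ihρ
    · exact PiC.ff 1

lemma flatten_sigma (C : Finset (F Ap)) (ψ : F Ap) : SigmaC Ap 2 (flatten C ψ) := by
  induction ψ with
  | tt => exact SigmaC.tt 2
  | ff => exact SigmaC.ff 2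
  | pos a => exact SigmaC.pos 2 a
  | nlit a => exact SigmaC.nlit 2 a
  | and φ ρ ihφ ihρ => exact SigmaC.and ihφ ihρ
  | or φ ρ ihφ ihρ => exact SigmaC.or ihφ ihρ
  | next φ ih => exact SigmaC.next ih
  | untl φ ρ ihφ ihρ => exact SigmaC.untl ihφ ihρ
  | srel φ ρ ihφ ihρ => exact SigmaC.srel ihφ ihρ
  | wuntl φ ρ ihφ ihρ =>
    exact SigmaC.untl ihφ (SigmaC.or ihρ
      (SigmaC.ofPi (PiC.wuntl (eval_pi C φ) (PiC.ff 1))))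
  | rel φ ρ ihφ ihρ =>
    exact SigmaC.srel (SigmaC.or ihφ
      (SigmaC.ofPi (PiC.wuntl (eval_pi C ρ) (PiC.ff 1)))) ihρ

lemma eval_mono {C C' : Finset (F Ap)} (h : C ⊆ C') (ψ : F Ap) :
    ∀ w, Sat w (eval C ψ) → Sat w (eval C' ψ) := by
  induction ψ with
  | tt => exact fun _ h => h
  | ff => exact fun _ h => h
  | pos a => exact fun _ h => h
  | nlit a => exact fun _ h => h
  | and φ ρ ihφ ihρ =>
    intro w hs
    simp only [eval, Sat] at hs ⊢
    exact ⟨ihφ w hs.1, ihρ w hs.2⟩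
  | or φ ρ ihφ ihρ =>
    intro w hs
    simp only [eval, Sat] at hs ⊢
    rcases hs with hs | hs
    · exact Or.inl (ihφ w hs)
    · exact Or.inr (ihρ w hs)
  | next φ ih =>
    intro w hs
    simp only [eval, Sat] at hs ⊢
    exact ih _ hs
  | wuntl φ ρ ihφ ihρ =>
    intro w hs
    simp only [eval, Sat] at hs ⊢
    rcases hs with hs | ⟨k, hk, hm⟩
    · exact Or.inl fun k => ihφ _ (hs k)
    · exact Or.inr ⟨k, ihρ _ hk, fun m hmk => ihφ _ (hm m hmk)⟩
  | rel φ ρ ihφ ihρ =>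
    intro w hs
    simp only [eval, Sat] at hs ⊢
    rcases hs with hs | ⟨k, hk, hm⟩
    · exact Or.inl fun k => ihρ _ (hs k)
    · exact Or.inr ⟨k, ihφ _ hk, fun m hmk => ihρ _ (hm m hmk)⟩
  | untl φ ρ ihφ ihρ =>
    intro w hs
    simp only [eval] at hs ⊢
    by_cases hmem : GFf ρ ∈ C
    · rw [if_pos hmem] at hs
      rw [if_pos (h hmem)]
      simp only [Sat] at hs ⊢
      rcases hs with hs | ⟨k, hk, hm⟩
      · exact Or.inl fun k => ihφ _ (hs k)
      · exact Or.inr ⟨k, ihρ _ hk, fun m hmk => ihφ _ (hm m hmk)⟩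
    · rw [if_neg hmem] at hs
      simp [Sat] at hs
  | srel φ ρ ihφ ihρ =>
    intro w hs
    simp only [eval] at hs ⊢
    by_cases hmem : GFf φ ∈ C
    · rw [if_pos hmem] at hs
      rw [if_pos (h hmem)]
      simp only [Sat] at hs ⊢
      rcases hs with hs | ⟨k, hk, hm⟩
      · exact Or.inl fun k => ihρ _ (hs k)
      · exact Or.inr ⟨k, ihφ _ hk, fun m hmk => ihρ _ (hm m hmk)⟩
    · rw [if_neg hmem] at hs
      simp [Sat] at hs

lemma flatten_mono {C C' : Finset (F Ap)} (h : C ⊆ C') (ψ : F Ap) :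
    ∀ w, Sat w (flatten C ψ) → Sat w (flatten C' ψ) := by
  induction ψ with
  | tt => exact fun _ h => h
  | ff => exact fun _ h => h
  | pos a => exact fun _ h => h
  | nlit a => exact fun _ h => h
  | and φ ρ ihφ ihρ =>
    intro w hs
    simp only [flatten, Sat] at hs ⊢
    exact ⟨ihφ w hs.1, ihρ w hs.2⟩
  | or φ ρ ihφ ihρ =>
    intro w hs
    simp only [flatten, Sat] at hs ⊢
    rcases hs with hs | hs
    · exact Or.inl (ihφ w hs)
    · exact Or.inr (ihρ w hs)
  | next φ ih =>
    intro w hs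
    simp only [flatten, Sat] at hs ⊢
    exact ih _ hs
  | untl φ ρ ihφ ihρ =>
    intro w hs
    simp only [flatten, Sat] at hs ⊢
    obtain ⟨k, hk, hm⟩ := hs
    exact ⟨k, ihρ _ hk, fun m hmk => ihφ _ (hm m hmk)⟩
  | srel φ ρ ihφ ihρ =>
    intro w hs
    simp only [flatten, Sat] at hs ⊢
    obtain ⟨k, hk, hm⟩ := hs
    exact ⟨k, ihφ _ hk, fun m hmk => ihρ _ (hm m hmk)⟩
  | wuntl φ ρ ihφ ihρ =>
    intro w hs
    simp only [flatten, Sat] at hs ⊢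
    obtain ⟨k, hk | hk, hm⟩ := hs
    · exact ⟨k, Or.inl (ihρ _ hk), fun m hmk => ihφ _ (hm m hmk)⟩
    · rcases hk with hk | ⟨_, hfalse, _⟩
      · exact ⟨k, Or.inr (Or.inl fun n => eval_mono h φ _ (hk n)),
          fun m hmk => ihφ _ (hm m hmk)⟩
      · exact hfalse.elim
  | rel φ ρ ihφ ihρ =>
    intro w hs
    simp only [flatten, Sat] at hs ⊢
    obtain ⟨k, hk | hk, hm⟩ := hs
    · exact ⟨k, Or.inl (ihφ _ hk), fun m hmk => ihρ _ (hm m hmk)⟩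
    · rcases hk with hk | ⟨_, hfalse, _⟩
      · exact ⟨k, Or.inr (Or.inl fun n => eval_mono h ρ _ (hk n)),
          fun m hmk => ihρ _ (hm m hmk)⟩
      · exact hfalse.elim

end Aux


/-- properties of `flatten(φ,C)`. -/
theorem flatten_main {Ap : Type} [Fintype Ap] [DecidableEq Ap] (φ : F Ap) :
    ∀ C ⊆ Bset φ,
      SigmaC Ap 2 (flatten C φ) ∧
      EquivUnder (Bset φ) C φ (flatten C φ) ∧
      (∀ C' : Finset (F Ap), C ⊆ C' → C' ⊆ Bset φ →
        Entails (flatten C φ) (flatten C' φ)) := by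
  intro C hC
  refine ⟨flatten_sigma C φ, ?_, ?_⟩
  · intro w hw
    exact flatten_correct hC φ (Finset.Subset.refl _) w hw
  · intro C' hCC' _ w
    exact flatten_mono hCC' φ w

end LTLNorm
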